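/- For even n ≥ 4, the abelianization of the Fibonacci group F(n) = ⟨x_1,…,x_n | x_i x_{i+1} = x_{i+2} (indices mod n)⟩ is a finite group of order f_{n-1} + f_{n+1} - 2. -/

import Mathlib

/-- The relators of the Fibonacci group `F(n)`: `x_i x_{i+1} x_{i+2}⁻¹` for `i` mod `n`. -/
def fibonacciRels (n : ℕ) : Set (FreeGroup (ZMod n)) :=
  ⋃ i : ZMod n,
    {FreeGroup.of i * FreeGroup.of (i + 1) * (FreeGroup.of (i + 2))⁻¹}

/-- The Fibonacci group `F(n) = ⟨x_1,…,x_n ∣ x_i x_{i+1} = x_{i+2}⟩`. -/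
def FibonacciGroup (n : ℕ) : Type := PresentedGroup (fibonacciRels n)

instance (n : ℕ) : Group (FibonacciGroup n) :=
  inferInstanceAs (Group (PresentedGroup (fibonacciRels n)))

open Polynomial AdjoinRoot

/-- Cardinality of the quotient of a finite free ℤ-algebra domain by the span of a nonzero
element equals the absolute value of the norm. (This is `Ideal.absNorm_span_singleton`
without the Dedekind hypothesis.) -/
theorem cardQuot_span_singleton_eq_natAbs_norm {S : Type*} [CommRing S] [IsDomain S]
    [Module.Free ℤ S] [Module.Finite ℤ S] (r : S) (hr : r ≠ 0) :
    Nat.card (S ⧸ Ideal.span ({r} : Set S)) = (Algebra.norm ℤ r).natAbs := by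
  have key : ∀ (I : Ideal S), I ≠ ⊥ → ∀ (e : S ≃ₗ[ℤ] I),
      Nat.card (S ⧸ I) = (LinearMap.det
        ((Submodule.subtype I).restrictScalars ℤ ∘ₗ (e : S →ₗ[ℤ] I))).natAbs := by
    intro I hI e
    let ι := Module.Free.ChooseBasisIndex ℤ S
    let b := Module.Free.chooseBasis ℤ S
    cases isEmpty_or_nonempty ι
    · exact (not_nontrivial_iff_subsingleton.mpr
        (Function.Surjective.subsingleton b.repr.toEquiv.symm.surjective) (by infer_instance)).elim
    haveI := Ideal.finiteQuotientOfFreeOfNeBot I hI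
    letI := Classical.decEq ι
    let a := I.smithCoeffs b hI
    let b' := I.ringBasis b hI
    let ab := I.selfBasis b hI
    have ab_eq := I.selfBasis_def b hI
    let e' : S ≃ₗ[ℤ] I := b'.equiv ab (Equiv.refl _)
    let f : S →ₗ[ℤ] S := (I.subtype.restrictScalars ℤ).comp (e' : S →ₗ[ℤ] I)
    have f_apply : ∀ x, f x = b'.equiv ab (Equiv.refl _) x := fun x => rfl
    suffices Nat.card (S ⧸ I) = (LinearMap.det f).natAbs by
      rw [this]
      exact (Int.natAbs_eq_iff_associated.mpr (LinearMap.associated_det_comp_equiv _ _ _)).symm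
    have ha : ∀ i, f (b' i) = a i • b' i := by
      intro i; rw [f_apply, b'.equiv_apply, Equiv.refl_apply, ab_eq]
    haveI : ∀ i, NeZero (a i).natAbs := fun i =>
      ⟨Int.natAbs_ne_zero.mpr (Ideal.smithCoeffs_ne_zero b I hI i)⟩
    calc
      Nat.card (S ⧸ I) = ∏ i, Int.natAbs (a i) := by
        simp_rw [Nat.card_congr (Ideal.quotientEquivPiZMod I b hI).toEquiv, Nat.card_pi,
          Nat.card_zmod]
        rfl
      _ = Int.natAbs (∏ i, a i) := (map_prod Int.natAbsHom a Finset.univ).symm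
      _ = Int.natAbs (Matrix.diagonal a).det := by rw [Matrix.det_diagonal]
      _ = Int.natAbs (LinearMap.toMatrix b' b' f).det := by
        congr 2; ext i j
        rw [LinearMap.toMatrix_apply, ha, LinearEquiv.map_smul, Module.Basis.repr_self,
          Finsupp.smul_single, smul_eq_mul, mul_one]
        by_cases h : i = j
        · rw [h, Matrix.diagonal_apply_eq, Finsupp.single_eq_same]
        · rw [Matrix.diagonal_apply_ne _ h, Finsupp.single_eq_of_ne' (Ne.symm h)]
      _ = (LinearMap.det f).natAbs := by rw [LinearMap.det_toMatrix]
  rw [Algebra.norm_apply]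
  let b := Module.Free.chooseBasis ℤ S
  rw [key _ (mt Ideal.span_singleton_eq_bot.mp hr)
    (b.equiv (Ideal.basisSpanSingleton b hr) (Equiv.refl _))]
  congr 2
  refine b.ext fun i => ?_
  simp



noncomputable section

/-- The golden polynomial `X² - X - 1`. -/
def fibPoly : ℤ[X] := X ^ 2 - X - 1

lemma fibPoly_natDegree : fibPoly.natDegree = 2 := by
  unfold fibPoly; compute_degree!

lemma fibPoly_monic : fibPoly.Monic := by
  unfold fibPoly Monic leadingCoeff
  rw [show (X ^ 2 - X - 1 : ℤ[X]).natDegree = 2 from fibPoly_natDegree]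
  simp [coeff_one, coeff_X]

lemma fibPoly_irreducible : Irreducible fibPoly := by
  rw [fibPoly_monic.irreducible_iff_roots_eq_zero_of_degree_le_three
    (by rw [fibPoly_natDegree]) (by rw [fibPoly_natDegree]; norm_num)]
  rw [Multiset.eq_zero_iff_forall_notMem]
  intro r hr
  rw [mem_roots fibPoly_monic.ne_zero, IsRoot.def] at hr
  simp only [fibPoly, eval_sub, eval_pow, eval_X, eval_one] at hr
  have hu : IsUnit r := IsUnit.of_mul_eq_one (a := r) (r - 1) (by linarith [hr])
  rcases Int.isUnit_iff.mp hu with rfl | rfl <;> norm_num at hr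

instance : IsDomain (AdjoinRoot fibPoly) := by
  have hprime : Prime fibPoly :=
    UniqueFactorizationMonoid.irreducible_iff_prime.mp fibPoly_irreducible
  haveI : (Ideal.span {fibPoly}).IsPrime :=
    (Ideal.span_singleton_prime hprime.ne_zero).mpr hprime
  exact inferInstanceAs (IsDomain (ℤ[X] ⧸ Ideal.span {fibPoly}))

/-- The golden ring `ℤ[φ]`. -/
abbrev GoldenRing : Type := AdjoinRoot fibPoly

/-- The golden ratio in `GoldenRing`. -/
def grho : GoldenRing := root fibPoly

/-- The basis `1, φ` of the golden ring. -/
def goldenBasis : Module.Basis (Fin 2) ℤ GoldenRing :=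
  (powerBasis' fibPoly_monic).basis.reindex (finCongr fibPoly_natDegree)

instance : Module.Free ℤ GoldenRing := Module.Free.of_basis goldenBasis
instance : Module.Finite ℤ GoldenRing := Module.Finite.of_basis goldenBasis

lemma goldenBasis_zero : goldenBasis 0 = 1 := by
  rw [goldenBasis, Module.Basis.reindex_apply, PowerBasis.coe_basis]
  simp
  exact pow_zero _

lemma goldenBasis_one : goldenBasis 1 = grho := by
  rw [goldenBasis, Module.Basis.reindex_apply, PowerBasis.coe_basis]
  simp [grho, powerBasis'_gen]
  exact pow_one _

lemma grho_sq : grho ^ 2 = grho + 1 := by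
  have h : (AdjoinRoot.mk fibPoly) fibPoly = 0 := AdjoinRoot.mk_self
  simp only [fibPoly, map_sub, map_pow, AdjoinRoot.mk_X, map_one] at h
  have : root fibPoly ^ 2 - root fibPoly - 1 = 0 := h
  unfold grho
  linear_combination this

lemma grho_pow_rec (k : ℕ) : grho ^ (k + 2) = grho ^ (k + 1) + grho ^ k := by
  have h : grho ^ (k + 2) = grho ^ k * grho ^ 2 := by ring
  rw [h, grho_sq]; ring

lemma grho_pow (k : ℕ) :
    grho ^ (k + 1) = (Nat.fib k : ℤ) • (1 : GoldenRing) + (Nat.fib (k + 1) : ℤ) • grho := by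
  induction k using Nat.twoStepInduction with
  | zero => simp
  | one => rw [grho_pow_rec 0]; simp [add_comm]
  | more k ih1 ih2 =>
    have e2 : Nat.fib (k + 2) = Nat.fib k + Nat.fib (k + 1) := Nat.fib_add_two
    have e3 : Nat.fib (k + 2 + 1) = Nat.fib (k + 1) + Nat.fib (k + 2) := by
      rw [show k + 2 + 1 = (k + 1) + 2 from rfl]; exact Nat.fib_add_two
    rw [grho_pow_rec (k + 1), ih1, ih2, e3, e2]
    push_cast
    module

lemma cassini (m : ℕ) :
    (Nat.fib m : ℤ) * Nat.fib (m + 2) - (Nat.fib (m + 1) : ℤ) ^ 2 = (-1) ^ (m + 1) := by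
  induction m with
  | zero => simp
  | succ k ih =>
    have e2 : (Nat.fib (k + 2) : ℤ) = Nat.fib k + Nat.fib (k + 1) := by
      exact_mod_cast Nat.fib_add_two
    have e3 : (Nat.fib (k + 1 + 2) : ℤ) = Nat.fib (k + 1) + Nat.fib (k + 2) := by
      exact_mod_cast Nat.fib_add_two (n := k + 1)
    rw [e3, e2]
    rw [e2] at ih
    ring_nf
    ring_nf at ih
    linarith [ih]

lemma basisRepr_combo (a b : ℤ) (i : Fin 2) :
    goldenBasis.repr (a • goldenBasis 0 + b • goldenBasis 1) i =
      a * (Finsupp.single (0 : Fin 2) (1 : ℤ)) i + b * (Finsupp.single (1 : Fin 2) (1 : ℤ)) i := by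
  rw [map_add, map_smul, map_smul, Module.Basis.repr_self, Module.Basis.repr_self]
  simp [Finsupp.single_apply]

lemma norm_grho_pow_sub_one (n : ℕ) (hn : 1 ≤ n) :
    Algebra.norm ℤ (grho ^ n - 1) =
      ((Nat.fib (n - 1) : ℤ) - 1) * ((Nat.fib (n + 1) : ℤ) - 1) -
        (Nat.fib n : ℤ) * (Nat.fib n : ℤ) := by
  obtain ⟨m, rfl⟩ : ∃ m, n = m + 1 := ⟨n - 1, by omega⟩
  set g : GoldenRing := grho ^ (m + 1) - 1 with hg
  have h0 : g * goldenBasis 0 = ((Nat.fib m : ℤ) - 1) • goldenBasis 0 +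
      (Nat.fib (m + 1) : ℤ) • goldenBasis 1 := by
    rw [goldenBasis_zero, goldenBasis_one, mul_one, hg, grho_pow m]
    module
  have h1 : g * goldenBasis 1 = (Nat.fib (m + 1) : ℤ) • goldenBasis 0 +
      ((Nat.fib (m + 2) : ℤ) - 1) • goldenBasis 1 := by
    rw [goldenBasis_zero, goldenBasis_one, hg]
    have : (grho ^ (m + 1) - 1) * grho = grho ^ (m + 2) - grho := by ring
    rw [this, grho_pow (m + 1)]
    module
  rw [Algebra.norm_eq_matrix_det goldenBasis, Matrix.det_fin_two]
  simp only [Algebra.leftMulMatrix_eq_repr_mul, h0, h1, basisRepr_combo]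
  simp [Finsupp.single_apply]

/-! ### The group-theoretic part -/

/-- The ideal `(φⁿ - 1)` of the golden ring. -/
def fibIdeal (n : ℕ) : Ideal GoldenRing := Ideal.span {grho ^ n - 1}

/-- `fibIdeal n` as a `ℤ`-submodule. -/
def fibSub (n : ℕ) : Submodule ℤ GoldenRing := (fibIdeal n).restrictScalars ℤ

lemma mul_mem_fibSub (n : ℕ) (s : GoldenRing) : s * (grho ^ n - 1) ∈ fibSub n :=
  Ideal.mul_mem_left _ s (Ideal.subset_span rfl)

lemma fibSub_mkQ_pow_add (n k : ℕ) :
    (fibSub n).mkQ (grho ^ (k + n)) = (fibSub n).mkQ (grho ^ k) := by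
  rw [← sub_eq_zero, ← map_sub, Submodule.mkQ_apply, Submodule.Quotient.mk_eq_zero]
  have h : grho ^ (k + n) - grho ^ k = grho ^ k * (grho ^ n - 1) := by ring
  rw [h]
  exact mul_mem_fibSub n _

lemma fibSub_mkQ_pow_mod (n : ℕ) (k : ℕ) :
    (fibSub n).mkQ (grho ^ (k % n)) = (fibSub n).mkQ (grho ^ k) := by
  induction k using Nat.strong_induction_on with
  | _ k ih =>
    rcases lt_or_ge k n with h | h
    · rw [Nat.mod_eq_of_lt h]
    · rcases Nat.eq_zero_or_pos n with rfl | hn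
      · simp
      have h1 : k % n = (k - n) % n := Nat.mod_eq_sub_mod h
      rw [h1, ih (k - n) (by omega)]
      have h2 := fibSub_mkQ_pow_add n (k - n)
      rw [show k - n + n = k from by omega] at h2
      exact h2.symm

lemma fibSub_mkQ_pow_cast (n : ℕ) [NeZero n] (k : ℕ) :
    (fibSub n).mkQ (grho ^ ((k : ZMod n)).val) = (fibSub n).mkQ (grho ^ k) := by
  rw [ZMod.val_natCast]
  exact fibSub_mkQ_pow_mod n k

/-- The map sending the `i`-th generator to the class of `φ^i`. -/
def fibFmap (n : ℕ) : ZMod n → Multiplicative (GoldenRing ⧸ fibSub n) := fun i =>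
  Multiplicative.ofAdd ((fibSub n).mkQ (grho ^ i.val))

lemma fib_lift_rels (n : ℕ) [NeZero n] :
    ∀ r ∈ fibonacciRels n, FreeGroup.lift (fibFmap n) r = 1 := by
  intro r hr
  simp only [fibonacciRels, Set.mem_iUnion, Set.mem_singleton_iff] at hr
  obtain ⟨i, rfl⟩ := hr
  have hv : ∀ j : ℕ, (fibSub n).mkQ (grho ^ ((i + (j : ZMod n))).val) =
      (fibSub n).mkQ (grho ^ (i.val + j)) := by
    intro j
    have e : ((i.val + j : ℕ) : ZMod n) = i + (j : ZMod n) := by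
      push_cast
      rw [ZMod.natCast_rightInverse i]
    rw [← e, fibSub_mkQ_pow_cast]
  simp only [map_mul, map_inv, FreeGroup.lift_apply_of, fibFmap]
  rw [show ((1 : ZMod n)) = ((1 : ℕ) : ZMod n) by push_cast; rfl,
    show ((2 : ZMod n)) = ((2 : ℕ) : ZMod n) by push_cast; rfl, hv 1, hv 2]
  rw [← ofAdd_neg, ← ofAdd_add, ← ofAdd_add, ← map_neg, ← map_add, ← map_add]
  have h : grho ^ i.val + grho ^ (i.val + 1) + -grho ^ (i.val + 2) = 0 := by
    linear_combination (-(grho ^ i.val)) * grho_sq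
  rw [h, map_zero]
  rfl

/-- The homomorphism from the abelianization of the Fibonacci group to the golden quotient. -/
def fibPhi (n : ℕ) [NeZero n] :
    Abelianization (FibonacciGroup n) →* Multiplicative (GoldenRing ⧸ fibSub n) :=
  Abelianization.lift (PresentedGroup.toGroup (fib_lift_rels n))

/-- The `k`-th generator of the Fibonacci group. -/
def fibGen (n : ℕ) (k : ℕ) : FibonacciGroup n := PresentedGroup.of ((k : ZMod n))

lemma fibGen_rel (n : ℕ) (i : ZMod n) :
    (PresentedGroup.of i : FibonacciGroup n) * PresentedGroup.of (i + 1) *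
      (PresentedGroup.of (i + 2))⁻¹ = 1 := by
  have hmem : FreeGroup.of i * FreeGroup.of (i + 1) * (FreeGroup.of (i + 2))⁻¹ ∈
      fibonacciRels n := Set.mem_iUnion.mpr ⟨i, rfl⟩
  have h : PresentedGroup.mk (fibonacciRels n)
      (FreeGroup.of i * FreeGroup.of (i + 1) * (FreeGroup.of (i + 2))⁻¹) = 1 :=
    (QuotientGroup.eq_one_iff _).mpr (Subgroup.subset_normalClosure hmem)
  simpa [map_mul, map_inv, PresentedGroup.of] using h

lemma fibGen_rec (n : ℕ) (k : ℕ) :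
    fibGen n k * fibGen n (k + 1) = fibGen n (k + 2) := by
  have h := fibGen_rel n ((k : ZMod n))
  have e1 : ((k : ZMod n)) + 1 = ((k + 1 : ℕ) : ZMod n) := by push_cast; ring
  have e2 : ((k : ZMod n)) + 2 = ((k + 2 : ℕ) : ZMod n) := by push_cast; ring
  rw [e1, e2] at h
  exact mul_inv_eq_one.mp h

/-- The image of the `k`-th generator in the (additivized) abelianization. -/
def fibY (n : ℕ) (k : ℕ) : Additive (Abelianization (FibonacciGroup n)) :=
  Additive.ofMul (Abelianization.of (fibGen n k))

lemma fibY_rec (n : ℕ) (k : ℕ) : fibY n k + fibY n (k + 1) = fibY n (k + 2) := by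
  unfold fibY
  rw [← ofMul_mul, ← map_mul, fibGen_rec]

/-- The linear map from the golden ring onto the abelianization. -/
noncomputable def fibPsiLin (n : ℕ) :
    GoldenRing →ₗ[ℤ] Additive (Abelianization (FibonacciGroup n)) :=
  goldenBasis.constr ℤ ![fibY n 0, fibY n 1]

lemma fibPsiLin_pow (n : ℕ) (k : ℕ) : fibPsiLin n (grho ^ k) = fibY n k := by
  induction k using Nat.twoStepInduction with
  | zero => rw [pow_zero, ← goldenBasis_zero, fibPsiLin, Module.Basis.constr_basis]; rfl
  | one => rw [pow_one, ← goldenBasis_one, fibPsiLin, Module.Basis.constr_basis]; rfl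
  | more k ih1 ih2 =>
    rw [grho_pow_rec k, map_add, ih1, ih2, add_comm]
    exact fibY_rec n k

lemma fibY_congr (n : ℕ) (k l : ℕ) (h : (k : ZMod n) = (l : ZMod n)) : fibY n k = fibY n l := by
  unfold fibY fibGen
  rw [h]

lemma fibPsiLin_ker (n : ℕ) [NeZero n] : fibSub n ≤ LinearMap.ker (fibPsiLin n) := by
  intro z hz
  rw [LinearMap.mem_ker]
  have hz' : z ∈ fibIdeal n := hz
  obtain ⟨s, hs⟩ := Ideal.mem_span_singleton'.mp hz'
  have hψg : fibPsiLin n (grho ^ n - 1) = 0 := by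
    rw [show (1 : GoldenRing) = grho ^ 0 from (pow_zero _).symm, map_sub,
      fibPsiLin_pow, fibPsiLin_pow, fibY_congr n n 0 (by simp), sub_self]
  have hψρg : fibPsiLin n (grho * (grho ^ n - 1)) = 0 := by
    have h : grho * (grho ^ n - 1) = grho ^ (n + 1) - grho ^ 1 := by ring
    rw [h, map_sub, fibPsiLin_pow, fibPsiLin_pow, fibY_congr n (n + 1) 1 (by push_cast; simp),
      sub_self]
  have hsrepr : s = goldenBasis.repr s 0 • goldenBasis 0 + goldenBasis.repr s 1 • goldenBasis 1 := by
    have h := Module.Basis.sum_repr goldenBasis s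
    rw [Fin.sum_univ_two] at h
    exact h.symm
  rw [← hs]
  calc fibPsiLin n (s * (grho ^ n - 1))
      = fibPsiLin n ((goldenBasis.repr s 0) • (goldenBasis 0 * (grho ^ n - 1)) +
          (goldenBasis.repr s 1) • (goldenBasis 1 * (grho ^ n - 1))) := by
        conv_lhs => rw [hsrepr]
        rw [add_mul, smul_mul_assoc, smul_mul_assoc]
    _ = 0 := by
        rw [map_add, map_smul, map_smul, goldenBasis_zero, goldenBasis_one, one_mul,
          hψg, hψρg, smul_zero, smul_zero, add_zero]

/-- The homomorphism from the golden quotient back to the abelianization. -/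
noncomputable def fibPsi (n : ℕ) [NeZero n] :
    Multiplicative (GoldenRing ⧸ fibSub n) →* Abelianization (FibonacciGroup n) :=
  AddMonoidHom.toMultiplicativeLeft
    ((fibSub n).liftQ (fibPsiLin n) (fibPsiLin_ker n)).toAddMonoidHom


lemma fibPhi_of (n : ℕ) [NeZero n] (i : ZMod n) :
    fibPhi n (Abelianization.of (PresentedGroup.of i : FibonacciGroup n)) =
      Multiplicative.ofAdd ((fibSub n).mkQ (grho ^ i.val)) := by
  unfold fibPhi
  exact (Abelianization.lift_apply_of _ _).trans (PresentedGroup.toGroup.of _)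

lemma fibPsi_ofAdd (n : ℕ) [NeZero n] (s : GoldenRing) :
    fibPsi n (Multiplicative.ofAdd ((fibSub n).mkQ s)) = Additive.toMul (fibPsiLin n s) := rfl

lemma fib_comp1 (n : ℕ) [NeZero n] :
    (fibPsi n).comp (fibPhi n) = MonoidHom.id (Abelianization (FibonacciGroup n)) := by
  apply Abelianization.hom_ext
  apply PresentedGroup.ext
  intro i
  show fibPsi n (fibPhi n (Abelianization.of (PresentedGroup.of i))) =
    Abelianization.of (PresentedGroup.of i)
  rw [fibPhi_of, fibPsi_ofAdd, fibPsiLin_pow]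
  have h : ((i.val : ℕ) : ZMod n) = i := ZMod.natCast_rightInverse i
  simp only [fibY, fibGen, h, toMul_ofMul]
  exact rfl

lemma fib_comp2_lin (n : ℕ) [NeZero n] (h1n : 1 < n) :
    (MonoidHom.toAdditiveLeft (fibPhi n)).toIntLinearMap.comp (fibPsiLin n) = (fibSub n).mkQ := by
  apply goldenBasis.ext
  intro i
  fin_cases i
  · show (MonoidHom.toAdditiveLeft (fibPhi n)).toIntLinearMap.comp (fibPsiLin n) (goldenBasis 0) =
      (fibSub n).mkQ (goldenBasis 0)
    rw [LinearMap.comp_apply, goldenBasis_zero,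
      show (1 : GoldenRing) = grho ^ 0 from (pow_zero _).symm, fibPsiLin_pow]
    show MonoidHom.toAdditiveLeft (fibPhi n) (fibY n 0) = (fibSub n).mkQ (grho ^ 0)
    rw [MonoidHom.coe_toAdditiveLeft]
    show Multiplicative.toAdd (fibPhi n (Abelianization.of (fibGen n 0))) = _
    rw [show fibGen n 0 = PresentedGroup.of ((0 : ℕ) : ZMod n) from rfl, fibPhi_of]
    simp [ZMod.val_zero]
  · show (MonoidHom.toAdditiveLeft (fibPhi n)).toIntLinearMap.comp (fibPsiLin n) (goldenBasis 1) =
      (fibSub n).mkQ (goldenBasis 1)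
    rw [LinearMap.comp_apply, goldenBasis_one,
      show grho = grho ^ 1 from (pow_one _).symm, fibPsiLin_pow]
    show MonoidHom.toAdditiveLeft (fibPhi n) (fibY n 1) = (fibSub n).mkQ (grho ^ 1)
    rw [MonoidHom.coe_toAdditiveLeft]
    show Multiplicative.toAdd (fibPhi n (Abelianization.of (fibGen n 1))) = _
    rw [show fibGen n 1 = PresentedGroup.of ((1 : ℕ) : ZMod n) from rfl, fibPhi_of]
    have hv : ((1 : ZMod n)).val = 1 := by
      rw [ZMod.val_one_eq_one_mod, Nat.mod_eq_of_lt h1n]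
    simp [hv]

lemma fib_comp2 (n : ℕ) [NeZero n] (h1n : 1 < n) :
    (fibPhi n).comp (fibPsi n) = MonoidHom.id (Multiplicative (GoldenRing ⧸ fibSub n)) := by
  apply MonoidHom.ext
  intro z
  obtain ⟨s, hs⟩ := (fibSub n).mkQ_surjective (Multiplicative.toAdd z)
  have hz : z = Multiplicative.ofAdd ((fibSub n).mkQ s) := by
    rw [hs]; rfl
  rw [hz]
  show fibPhi n (fibPsi n (Multiplicative.ofAdd ((fibSub n).mkQ s))) = _
  rw [fibPsi_ofAdd]
  have h := congrFun (congrArg (fun f => f.toFun) (fib_comp2_lin n h1n)) s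
  have h' : MonoidHom.toAdditiveLeft (fibPhi n) (fibPsiLin n s) = (fibSub n).mkQ s := h
  rw [MonoidHom.coe_toAdditiveLeft] at h'
  simp only [Function.comp_apply] at h'
  rw [MonoidHom.id_apply, ← h']
  rfl

/-- The abelianization of the Fibonacci group is the golden quotient. -/
noncomputable def fibEquiv (n : ℕ) [NeZero n] (h1n : 1 < n) :
    Abelianization (FibonacciGroup n) ≃* Multiplicative (GoldenRing ⧸ fibSub n) :=
  MonoidHom.toMulEquiv (fibPhi n) (fibPsi n) (fib_comp1 n) (fib_comp2 n h1n)

end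

/-- For even `n ≥ 4`, the abelianization of the Fibonacci group `F(n)` is finite of
order `f_{n-1} + f_{n+1} - 2`. -/
theorem fibonacciGroup_abelianization_card_even (n : ℕ) (hn : 4 ≤ n) (heven : Even n) :
    Finite (Abelianization (FibonacciGroup n)) ∧
      Nat.card (Abelianization (FibonacciGroup n)) = Nat.fib (n - 1) + Nat.fib (n + 1) - 2 := by
  haveI : NeZero n := ⟨by omega⟩
  have hnorm : Algebra.norm ℤ (grho ^ n - 1) =
      2 - ((Nat.fib (n - 1) : ℤ) + Nat.fib (n + 1)) := by
    rw [norm_grho_pow_sub_one n (by omega)]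
    have hcas := cassini (n - 1)
    rw [show n - 1 + 1 = n from by omega, show n - 1 + 2 = n + 1 from by omega,
      show (-1 : ℤ) ^ n = 1 from heven.neg_one_pow] at hcas
    nlinarith [hcas]
  have hL5 : 5 ≤ Nat.fib (n + 1) := by
    calc 5 = Nat.fib 5 := by decide
    _ ≤ Nat.fib (n + 1) := Nat.fib_mono (by omega)
  have hL5' : (5 : ℤ) ≤ (Nat.fib (n + 1) : ℤ) := by exact_mod_cast hL5
  have hg0 : grho ^ n - 1 ≠ 0 := by
    intro h
    rw [h, Algebra.norm_zero] at hnorm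
    have hnn : (0 : ℤ) ≤ (Nat.fib (n - 1) : ℤ) := Int.natCast_nonneg _
    linarith
  have hcard : Nat.card (GoldenRing ⧸ fibIdeal n) = (Algebra.norm ℤ (grho ^ n - 1)).natAbs :=
    cardQuot_span_singleton_eq_natAbs_norm _ hg0
  have hQcard : Nat.card (GoldenRing ⧸ fibSub n) = Nat.card (GoldenRing ⧸ fibIdeal n) :=
    Nat.card_congr (Submodule.Quotient.restrictScalarsEquiv ℤ (fibIdeal n)).toEquiv
  have hAcard : Nat.card (Abelianization (FibonacciGroup n)) =
      Nat.card (GoldenRing ⧸ fibSub n) :=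
    Nat.card_congr ((fibEquiv n (by omega)).toEquiv.trans Multiplicative.toAdd)
  have hval : (Algebra.norm ℤ (grho ^ n - 1)).natAbs =
      Nat.fib (n - 1) + Nat.fib (n + 1) - 2 := by
    rw [hnorm]
    omega
  constructor
  · refine Nat.finite_of_card_ne_zero ?_
    rw [hAcard, hQcard, hcard, hval]
    omega
  · rw [hAcard, hQcard, hcard, hval]
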